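/- Let l_1, …, l_m be linear forms in R = K[x_1,…,x_n] with m ≥ n+1 such that every n of them are K-linearly independent (generic arrangement). Then the ideal generated by all (m−n)-fold products l_{j_1}⋯l_{j_{m-n}} (with j_1 < ⋯ < j_{m-n}) equals the power m^{m-n} of the irrelevant maximal ideal m = (x_1,…,x_n). -/

import Mathlib

open MvPolynomial Finset

open Pointwise

lemma degree_one_single {σ : Type*} {d : σ →₀ ℕ} (h : d.degree = 1) :
    ∃ j, d = Finsupp.single j 1 := by
  classical
  have hne : d.support.Nonempty := by
    rw [Finsupp.support_nonempty_iff]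
    rintro rfl
    simp [Finsupp.degree] at h
  obtain ⟨j, hj⟩ := hne
  refine ⟨j, ?_⟩
  have hdj : 1 ≤ d j := Nat.one_le_iff_ne_zero.mpr (Finsupp.mem_support_iff.mp hj)
  have hsum : ∑ i ∈ d.support, d i = 1 := h
  have hsub : d.support ⊆ {j} := by
    intro i hi
    by_contra hij
    simp only [Finset.mem_singleton] at hij
    have hdi : 1 ≤ d i := Nat.one_le_iff_ne_zero.mpr (Finsupp.mem_support_iff.mp hi)
    have : 2 ≤ ∑ i ∈ d.support, d i := by
      calc 2 = 1 + 1 := rfl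
      _ ≤ d i + d j := add_le_add hdi hdj
      _ = ∑ x ∈ {i, j}, d x := by rw [Finset.sum_pair hij]
      _ ≤ ∑ i ∈ d.support, d i := Finset.sum_le_sum_of_subset (by
          intro x hx; simp only [Finset.mem_insert, Finset.mem_singleton] at hx
          rcases hx with rfl | rfl <;> assumption)
    omega
  have hdj1 : d j = 1 := by
    have := hsum
    rw [Finset.sum_subset hsub (by intro x _ hx; exact Finsupp.notMem_support_iff.mp hx)] at this
    simpa using this
  ext i
  rcases eq_or_ne i j with rfl | hij
  · simp [hdj1]
  · have : i ∉ d.support := fun hi => hij (Finset.mem_singleton.mp (hsub hi))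
    simp [Finsupp.notMem_support_iff.mp this, Finsupp.single_eq_of_ne' (Ne.symm hij)]

lemma homog_one_sum {K σ : Type*} [CommSemiring K] [Fintype σ] [DecidableEq σ]
    {p : MvPolynomial σ K} (hp : p.IsHomogeneous 1) :
    p = ∑ j, C (coeff (Finsupp.single j 1) p) * X j := by
  ext d
  rw [coeff_sum]
  simp only [coeff_C_mul, MvPolynomial.coeff_X', mul_ite, mul_one, mul_zero]
  by_cases hd : ∃ j, d = Finsupp.single j 1
  · obtain ⟨j, rfl⟩ := hd
    rw [Finset.sum_eq_single j]
    · simp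
    · intro b _ hb
      rw [if_neg]
      intro h
      exact hb (by
        have := Finsupp.single_left_injective (one_ne_zero) h
        exact this)
    · simp
  · have h0 : coeff d p = 0 := by
      by_contra hc
      refine hd (degree_one_single ?_)
      have := hp hc
      rwa [Finsupp.degree_eq_weight_one]
    rw [h0, Finset.sum_eq_zero]
    intro j _
    rw [if_neg]
    intro h
    exact hd ⟨j, h.symm⟩


lemma homog_factor {K σ : Type*} [Field K] {l F : MvPolynomial σ K} {k : ℕ}
    (hl : l.IsHomogeneous 1) (hF : F.IsHomogeneous (k + 1))
    (hmem : F ∈ Ideal.span ({l} : Set (MvPolynomial σ K))) :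
    ∃ G : MvPolynomial σ K, G.IsHomogeneous k ∧ F = l * G := by
  classical
  obtain ⟨g, hg⟩ := Ideal.mem_span_singleton.mp hmem
  refine ⟨homogeneousComponent k g, homogeneousComponent_isHomogeneous k g, ?_⟩
  have hFc : F = homogeneousComponent (k + 1) F := by
    rw [homogeneousComponent_of_mem ((mem_homogeneousSubmodule _ _).mpr hF), if_pos rfl]
  rw [hFc, hg]
  conv_lhs => rw [← sum_homogeneousComponent g, Finset.mul_sum, map_sum]
  have hterm : ∀ d : ℕ,
      homogeneousComponent (k + 1) (l * homogeneousComponent d g) =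
        if d = k then l * homogeneousComponent d g else 0 := by
    intro d
    have h1 : (l * homogeneousComponent d g).IsHomogeneous (1 + d) :=
      hl.mul (homogeneousComponent_isHomogeneous d g)
    rw [homogeneousComponent_of_mem ((mem_homogeneousSubmodule _ _).mpr h1)]
    by_cases hdk : d = k
    · subst hdk; rw [if_pos (by omega), if_pos rfl]
    · rw [if_neg (by omega), if_neg hdk]
  rw [Finset.sum_congr rfl (fun d _ => hterm d), Finset.sum_ite_eq' (Finset.range _) k]
  by_cases hk : k ∈ Finset.range (g.totalDegree + 1)
  · rw [if_pos hk]
  · rw [if_neg hk, homogeneousComponent_eq_zero, mul_zero]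
    simp only [Finset.mem_range] at hk
    omega

lemma sub_aeval_mem {K σ : Type*} [CommRing K] [Finite σ]
    (φ : MvPolynomial σ K →ₐ[K] MvPolynomial σ K) (I : Ideal (MvPolynomial σ K))
    (hX : ∀ i, X i - φ (X i) ∈ I) (p : MvPolynomial σ K) : p - φ p ∈ I := by
  induction p using MvPolynomial.induction_on with
  | C a => simp [algHom_C]
  | add p q hp hq =>
      have : p + q - φ (p + q) = (p - φ p) + (q - φ q) := by rw [map_add]; ring
      rw [this]; exact I.add_mem hp hq
  | mul_X p i hp =>
      have : p * X i - φ (p * X i) = p * (X i - φ (X i)) + (p - φ p) * φ (X i) := by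
        rw [map_mul]; ring
      rw [this]
      exact I.add_mem (I.mul_mem_left _ (hX i)) (I.mul_mem_right _ hp)


lemma core_k0 {K : Type*} [Field K] {n m : ℕ} (l : Fin m → MvPolynomial (Fin n) K)
    (f : MvPolynomial (Fin n) K) (hf : f.IsHomogeneous 0) :
    f ∈ Submodule.span K ((fun s : Finset (Fin m) => ∏ i ∈ s, l i) '' {s | s.card = 0}) := by
  classical
  have hfC : f = C (coeff 0 f) := by
    have h1 := homogeneousComponent_of_mem (m := 0) ((mem_homogeneousSubmodule 0 f).mpr hf)
    rw [if_pos rfl] at h1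
    conv_lhs => rw [← h1, homogeneousComponent_zero]
  have hmem : (1 : MvPolynomial (Fin n) K) ∈
      ((fun s : Finset (Fin m) => ∏ i ∈ s, l i) '' {s | s.card = 0}) :=
    ⟨∅, by simp, by simp⟩
  have : f = (coeff 0 f) • (1 : MvPolynomial (Fin n) K) := by
    rw [smul_eq_C_mul, mul_one]; exact hfC
  rw [this]
  exact Submodule.smul_mem _ _ (Submodule.subset_span hmem)

theorem core {K : Type*} [Field K] :
    ∀ N n k m : ℕ, n + k = m → m ≤ N →
    ∀ l : Fin m → MvPolynomial (Fin n) K,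
    (∀ i, (l i).IsHomogeneous 1) →
    (∀ s : Finset (Fin m), s.card = n → LinearIndependent K (fun i : s => l i)) →
    ∀ f : MvPolynomial (Fin n) K, f.IsHomogeneous k →
    f ∈ Submodule.span K ((fun s : Finset (Fin m) => ∏ i ∈ s, l i) '' {s | s.card = k}) := by
  classical
  intro N
  induction N with
  | zero =>
    intro n k m hm hN l hl hgen f hf
    obtain rfl : k = 0 := by omega
    exact core_k0 l f hf
  | succ N IH =>
    intro n k m hm hN l hl hgen f hf
    match n, k, hm with
    | n, 0, hm => exact core_k0 l f hf
    | 0, (k' + 1), hm =>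
      -- base case n = 0
      obtain ⟨a, rfl⟩ := MvPolynomial.C_surjective (Fin 0) f
      have ha : a = 0 := by
        by_contra ha
        have := hf (d := 0) (by simpa using ha)
        simp at this
      rw [ha, map_zero]
      exact Submodule.zero_mem _
    | (n' + 1), (k' + 1), hm =>
      match m, hm with
      | (m' + 1), hm =>
      -- main inductive step: n = n'+1, k = k'+1, m = m'+1
      set ltop := l (Fin.last m') with hltop
      have hmn : n' + 1 ≤ m' + 1 := by omega
      -- ltop ≠ 0
      have hlne : ltop ≠ 0 := by
        obtain ⟨t0, ht0sub, ht0card⟩ := Finset.exists_superset_card_eq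
          (s := ({Fin.last m'} : Finset (Fin (m' + 1)))) (n := n' + 1)
          (by simp) (by simp; omega)
        exact (hgen t0 ht0card).ne_zero ⟨Fin.last m', ht0sub (Finset.mem_singleton_self _)⟩
      have hdec : ltop = ∑ j, C (coeff (Finsupp.single j 1) ltop) * X j :=
        homog_one_sum (hl _)
      have hj0 : ∃ j₀, coeff (Finsupp.single j₀ 1) ltop ≠ 0 := by
        by_contra hco
        push_neg at hco
        apply hlne
        rw [hdec]
        exact Finset.sum_eq_zero fun j _ => by rw [hco j, map_zero, zero_mul]
      obtain ⟨j₀, hc⟩ := hj0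
      set c := coeff (Finsupp.single j₀ 1) ltop with hcdef
      set w : MvPolynomial (Fin n') K :=
        C (-c⁻¹) * ∑ i' : Fin n', C (coeff (Finsupp.single (j₀.succAbove i') 1) ltop) * X i'
        with hw
      set v : Fin (n' + 1) → MvPolynomial (Fin n') K :=
        fun i => (finSuccEquiv' j₀ i).elim w X with hv
      set ψ : MvPolynomial (Fin (n' + 1)) K →ₐ[K] MvPolynomial (Fin n') K := aeval v with hψ
      set ι : MvPolynomial (Fin n') K →ₐ[K] MvPolynomial (Fin (n' + 1)) K :=
        rename (j₀.succAbove) with hι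
      set φ : MvPolynomial (Fin (n' + 1)) K →ₐ[K] MvPolynomial (Fin (n' + 1)) K :=
        ι.comp ψ with hφ
      set I : Ideal (MvPolynomial (Fin (n' + 1)) K) := Ideal.span {ltop} with hI
      have hv1 : ∀ i, (v i).IsHomogeneous 1 := by
        intro i
        rcases eq_or_ne i j₀ with rfl | hi
        · have : v i = w := by rw [hv]; simp [finSuccEquiv'_at]
          rw [this, hw]
          exact IsHomogeneous.C_mul (IsHomogeneous.sum _ _ _
            (fun i' _ => isHomogeneous_C_mul_X _ _)) _
        · obtain ⟨i', rfl⟩ := Fin.exists_succAbove_eq hi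
          have : v (j₀.succAbove i') = X i' := by rw [hv]; simp [finSuccEquiv'_succAbove]
          rw [this]
          exact isHomogeneous_X _ _
      have hψhom : ∀ {d : ℕ} {p : MvPolynomial (Fin (n' + 1)) K},
          p.IsHomogeneous d → (ψ p).IsHomogeneous d := by
        intro d p hp
        have := hp.aeval v hv1
        rwa [one_mul] at this
      have hXsub : ∀ i, X i - φ (X i) ∈ I := by
        intro i
        rcases eq_or_ne i j₀ with rfl | hi
        · have hφX : φ (X i) = C (-c⁻¹) *
              ∑ i' : Fin n', C (coeff (Finsupp.single (i.succAbove i') 1) ltop) *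
                X (i.succAbove i') := by
            rw [hφ, AlgHom.comp_apply, hψ, aeval_X]
            have : v i = w := by rw [hv]; simp [finSuccEquiv'_at]
            rw [this, hw, hι]
            rw [map_mul, map_sum]
            simp [rename_C, rename_X]
          have hSdec : ∑ i' : Fin n',
              C (coeff (Finsupp.single (i.succAbove i') 1) ltop) * X (i.succAbove i') =
              ltop - C c * X i := by
            have h0 := Fin.sum_univ_succAbove
              (fun j => C (coeff (Finsupp.single j 1) ltop) * X j) i
            have h2 : ltop = C c * X i +
                ∑ i' : Fin n', C (coeff (Finsupp.single (i.succAbove i') 1) ltop) *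
                  X (i.succAbove i') := by
              rw [hcdef]; exact hdec.trans h0
            conv_rhs => rw [h2]
            ring
          rw [hφX, hSdec]
          have hcc : (C c⁻¹ * C c : MvPolynomial (Fin (n' + 1)) K) = 1 := by
            rw [← C_mul, inv_mul_cancel₀ hc, C_1]
          have hkey : X i - (- C c⁻¹) * (ltop - C c * X i) = C c⁻¹ * ltop := by
            linear_combination (-(X i) : MvPolynomial (Fin (n' + 1)) K) * hcc
          rw [map_neg, hkey]
          exact Ideal.mul_mem_left _ _ (Ideal.subset_span rfl)
        · obtain ⟨i', rfl⟩ := Fin.exists_succAbove_eq hi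
          have : φ (X (j₀.succAbove i')) = X (j₀.succAbove i') := by
            rw [hφ, AlgHom.comp_apply, hψ, aeval_X]
            have : v (j₀.succAbove i') = X i' := by rw [hv]; simp [finSuccEquiv'_succAbove]
            rw [this, hι, rename_X]
          rw [this, sub_self]
          exact Submodule.zero_mem _
      have hsub : ∀ p, p - φ p ∈ I := sub_aeval_mem φ I hXsub
      -- restricted families
      set lc : Fin m' → MvPolynomial (Fin (n' + 1)) K := fun i => l i.castSucc with hlc
      set lψ : Fin m' → MvPolynomial (Fin n') K := fun i => ψ (lc i) with hlψ
      have hlchom : ∀ i, (lc i).IsHomogeneous 1 := fun i => hl _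
      have hlψhom : ∀ i, (lψ i).IsHomogeneous 1 := fun i => hψhom (hlchom i)
      have hmemmap : ∀ {s : Finset (Fin m')} {i : Fin m'}, i ∈ s →
          i.castSucc ∈ s.map (Fin.castSuccEmb : Fin m' ↪ Fin (m' + 1)) :=
        fun hi => Finset.mem_map_of_mem _ hi
      have hgen' : ∀ s : Finset (Fin m'), s.card = n' + 1 →
          LinearIndependent K (fun i : s => lc i) := by
        intro s hs
        have h1 := hgen (s.map (Fin.castSuccEmb : Fin m' ↪ Fin (m' + 1))) (by simpa using hs)
        have h2 := h1.comp
          (fun i : s => (⟨(i : Fin m').castSucc, hmemmap i.2⟩ :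
            (s.map (Fin.castSuccEmb : Fin m' ↪ Fin (m' + 1)) : Finset (Fin (m' + 1)))))
          (by
            intro a b hab
            simp only [Subtype.mk.injEq, Fin.castSucc_inj] at hab
            exact Subtype.ext hab)
        exact h2
      have hnotmem : ∀ s : Finset (Fin m'),
          Fin.last m' ∉ s.map (Fin.castSuccEmb : Fin m' ↪ Fin (m' + 1)) := by
        intro s hmem
        obtain ⟨j, _, hj⟩ := Finset.mem_map.mp hmem
        exact absurd hj (Fin.castSucc_lt_last j).ne
      -- genericity downstairs
      have hdown_gen : ∀ s : Finset (Fin m'), s.card = n' →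
          LinearIndependent K (fun i : s => lψ i) := by
        intro s hs
        rw [Fintype.linearIndependent_iff]
        intro g hg
        set P : MvPolynomial (Fin (n' + 1)) K := ∑ i : s, g i • lc i with hP
        have hψP : ψ P = 0 := by
          rw [hP, map_sum]
          simpa only [map_smul] using hg
        have hPhom : P.IsHomogeneous 1 := by
          rw [hP]
          exact IsHomogeneous.sum _ _ _ (fun i _ => by
            rw [smul_eq_C_mul]; exact (hlchom i).C_mul _)
        have hPI : P ∈ I := by
          have h1 : φ P = 0 := by rw [hφ, AlgHom.comp_apply, hψP, map_zero]
          have h2 := hsub P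
          rwa [h1, sub_zero] at h2
        obtain ⟨G, hGhom, hPG⟩ := homog_factor (hl (Fin.last m')) hPhom hPI
        have hGC : G = C (coeff 0 G) := by
          have h1 := homogeneousComponent_of_mem (m := 0)
            ((mem_homogeneousSubmodule 0 G).mpr hGhom)
          rw [if_pos rfl] at h1
          conv_lhs => rw [← h1, homogeneousComponent_zero]
        set b : K := coeff 0 G with hb
        set t : Finset (Fin (m' + 1)) :=
          insert (Fin.last m') (s.map (Fin.castSuccEmb : Fin m' ↪ Fin (m' + 1))) with ht
        have htcard : t.card = n' + 1 := by
          rw [ht, Finset.card_insert_of_notMem (hnotmem s), Finset.card_map, hs]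
        have hind := hgen t htcard
        rw [Fintype.linearIndependent_iff] at hind
        set h : Fin (m' + 1) → K := fun x =>
          Fin.lastCases (-b) (fun j => if hj : j ∈ s then g ⟨j, hj⟩ else 0) x with hh
        have hcs : ∀ j : Fin m', ∀ hj : j ∈ s, h j.castSucc = g ⟨j, hj⟩ := by
          intro j hj
          simp only [hh, Fin.lastCases_castSucc, dif_pos hj]
        have hsum : ∑ i : t, h i • l i = 0 := by
          rw [Finset.sum_coe_sort t (fun x => h x • l x), ht,
            Finset.sum_insert (hnotmem s),
            Finset.sum_map s (Fin.castSuccEmb : Fin m' ↪ Fin (m' + 1)) (fun x => h x • l x)]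
          have e1 : ∑ j ∈ s, h (Fin.castSuccEmb j) • l (Fin.castSuccEmb j) = P := by
            rw [hP, ← Finset.sum_coe_sort s
              (fun j => h (Fin.castSuccEmb j) • l (Fin.castSuccEmb j))]
            apply Finset.sum_congr rfl
            intro j _
            rw [show Fin.castSuccEmb (j : Fin m') = (j : Fin m').castSucc from rfl,
              hcs (j : Fin m') j.2]
          have e2 : h (Fin.last m') = -b := by
            simp only [hh, Fin.lastCases_last]
          have e3 : P = b • ltop := by
            rw [hPG, hGC, smul_eq_C_mul, mul_comm]
          rw [e1, e2, e3, neg_smul]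
          ring
        have hall := hind (fun i => h i) hsum
        intro i
        have hmem : (i : Fin m').castSucc ∈ t := by
          rw [ht]; exact Finset.mem_insert_of_mem (hmemmap i.2)
        have h0 := hall ⟨(i : Fin m').castSucc, hmem⟩
        have hgi : g i = h ((i : Fin m').castSucc) := (hcs (i : Fin m') i.2).symm
        rw [hgi]
        exact h0

      -- apply IH downstairs to ψ f
      have hIH1 : ψ f ∈ Submodule.span K
          ((fun s : Finset (Fin m') => ∏ i ∈ s, lψ i) '' {s | s.card = k' + 1}) :=
        IH n' (k' + 1) m' (by omega) (by omega) lψ hlψhom hdown_gen (ψ f) (hψhom hf)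
      -- push span through ι
      have hφf : φ f ∈ Submodule.span K
          ((fun s : Finset (Fin m') => ∏ i ∈ s, φ (lc i)) '' {s | s.card = k' + 1}) := by
        have h1 := Submodule.apply_mem_span_image_of_mem_span ι.toLinearMap hIH1
        rw [← Set.image_comp] at h1
        have himg : (⇑ι.toLinearMap ∘ fun s : Finset (Fin m') => ∏ i ∈ s, lψ i) =
            fun s : Finset (Fin m') => ∏ i ∈ s, φ (lc i) := by
          funext s
          simp only [AlgHom.toLinearMap_apply, Function.comp_apply, map_prod]
          rfl
        rw [himg] at h1
        exact h1
      set π : MvPolynomial (Fin (n' + 1)) K →ₐ[K] (MvPolynomial (Fin (n' + 1)) K ⧸ I) :=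
        Ideal.Quotient.mkₐ K I with hπ
      have hπeq : ∀ p q : MvPolynomial (Fin (n' + 1)) K, p - q ∈ I → π p = π q := by
        intro p q h
        rw [hπ]
        simpa only [Ideal.Quotient.mkₐ_eq_mk] using Ideal.Quotient.eq.mpr h
      have hπf : π f ∈ Submodule.span K
          ((fun s : Finset (Fin m') => π (∏ i ∈ s, lc i)) '' {s | s.card = k' + 1}) := by
        have h1 := Submodule.apply_mem_span_image_of_mem_span π.toLinearMap hφf
        rw [← Set.image_comp] at h1
        have himg : (⇑π.toLinearMap ∘ fun s : Finset (Fin m') => ∏ i ∈ s, φ (lc i)) =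
            fun s : Finset (Fin m') => π (∏ i ∈ s, lc i) := by
          funext s
          simp only [AlgHom.toLinearMap_apply, Function.comp_apply, map_prod]
          exact Finset.prod_congr rfl fun i _ => (hπeq _ _ (hsub (lc i))).symm
        rw [himg] at h1
        have heqf : π f = π (φ f) := hπeq _ _ (hsub f)
        rw [heqf]
        exact h1
      have hmap : π f ∈ Submodule.map π.toLinearMap (Submodule.span K
          ((fun s : Finset (Fin m') => ∏ i ∈ s, lc i) '' {s | s.card = k' + 1})) := by
        rw [← Submodule.span_image, ← Set.image_comp]
        exact hπf
      obtain ⟨y, hy, hyf⟩ := Submodule.mem_map.mp hmap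
      have hFI : f - y ∈ I := by
        have : π (f - y) = 0 := by
          rw [map_sub]
          rw [show π.toLinearMap y = π y from rfl] at hyf
          rw [hyf, sub_self]
        rwa [hπ, Ideal.Quotient.mkₐ_eq_mk, Ideal.Quotient.eq_zero_iff_mem] at this
      have hyhom : y.IsHomogeneous (k' + 1) := by
        have hle : Submodule.span K
            ((fun s : Finset (Fin m') => ∏ i ∈ s, lc i) '' {s | s.card = k' + 1}) ≤
            homogeneousSubmodule (Fin (n' + 1)) K (k' + 1) := by
          rw [Submodule.span_le]
          rintro _ ⟨s, hs, rfl⟩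
          rw [SetLike.mem_coe, mem_homogeneousSubmodule]
          have hp := IsHomogeneous.prod s lc (fun _ => 1) (fun i _ => hlchom i)
          have : ∑ _i ∈ s, 1 = k' + 1 := by
            simp only [Finset.sum_const, smul_eq_mul, mul_one]
            exact hs
          rwa [this] at hp
        exact (mem_homogeneousSubmodule _ _).mp (hle hy)
      have hFhom : (f - y).IsHomogeneous (k' + 1) := hf.sub hyhom
      obtain ⟨G, hGhom, hFG⟩ := homog_factor (hl (Fin.last m')) hFhom hFI
      have hIH2 : G ∈ Submodule.span K
          ((fun s : Finset (Fin m') => ∏ i ∈ s, lc i) '' {s | s.card = k'}) :=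
        IH (n' + 1) k' m' (by omega) (by omega) lc hlchom hgen' G hGhom
      have hmul := Submodule.apply_mem_span_image_of_mem_span
        (LinearMap.mulLeft K ltop) hIH2
      rw [← Set.image_comp] at hmul
      have hyT : y ∈ Submodule.span K
          ((fun s : Finset (Fin (m' + 1)) => ∏ i ∈ s, l i) '' {s | s.card = k' + 1}) := by
        refine Submodule.span_mono ?_ hy
        rintro _ ⟨s, hs, rfl⟩
        exact ⟨s.map (Fin.castSuccEmb : Fin m' ↪ Fin (m' + 1)), by simpa using hs,
          by simp only [Finset.prod_map]; rfl⟩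
      have hFT : f - y ∈ Submodule.span K
          ((fun s : Finset (Fin (m' + 1)) => ∏ i ∈ s, l i) '' {s | s.card = k' + 1}) := by
        rw [hFG]
        refine Submodule.span_mono ?_ hmul
        rintro _ ⟨s, hs, rfl⟩
        refine ⟨insert (Fin.last m') (s.map (Fin.castSuccEmb : Fin m' ↪ Fin (m' + 1))), ?_, ?_⟩
        · simp only [Set.mem_setOf_eq, Finset.card_insert_of_notMem (hnotmem s),
            Finset.card_map]
          rw [hs]
        · simp only [Function.comp_apply, LinearMap.mulLeft_apply,
            Finset.prod_insert (hnotmem s), Finset.prod_map]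
          rfl
      have hfyy : f = y + (f - y) := by ring
      rw [hfyy]
      exact Submodule.add_mem _ hyT hFT



theorem stmt4 {K : Type*} [Field K] [Infinite K] {n m : ℕ} (hn : 2 ≤ n)
    (hm : n + 1 ≤ m)
    (l : Fin m → MvPolynomial (Fin n) K)
    (hl : ∀ i, (l i).IsHomogeneous 1)
    (hgen : ∀ s : Finset (Fin m), s.card = n →
      LinearIndependent K (fun i : s => l i)) :
    Ideal.span ((fun s : Finset (Fin m) => ∏ i ∈ s, l i) ''
        {s : Finset (Fin m) | s.card = m - n}) =
      (Ideal.span (Set.range (X : Fin n → MvPolynomial (Fin n) K))) ^ (m - n) := by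
  classical
  set k := m - n with hk
  have hmk : n + k = m := by omega
  apply le_antisymm
  · rw [Ideal.span_le]
    rintro _ ⟨s, hs, rfl⟩
    simp only [Set.mem_setOf_eq] at hs
    have hprod : ∀ s : Finset (Fin m), (∏ i ∈ s, l i) ∈
        (Ideal.span (Set.range (X : Fin n → MvPolynomial (Fin n) K))) ^ s.card := by
      intro s
      induction s using Finset.cons_induction with
      | empty => simp
      | cons i s his ih =>
        rw [Finset.prod_cons, Finset.card_cons, pow_succ, mul_comm (l i)]
        have hli : l i ∈ Ideal.span (Set.range (X : Fin n → MvPolynomial (Fin n) K)) := by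
          rw [homog_one_sum (hl i)]
          exact Submodule.sum_mem _ fun j _ =>
            Ideal.mul_mem_left _ _ (Ideal.subset_span ⟨j, rfl⟩)
        exact Ideal.mul_mem_mul ih hli
    have h1 := hprod s
    rw [hs] at h1
    exact h1
  · have hspow : (Ideal.span (Set.range (X : Fin n → MvPolynomial (Fin n) K))) ^ k =
        Ideal.span ((Set.range (X : Fin n → MvPolynomial (Fin n) K)) ^ k) :=
      Submodule.span_pow _ _
    rw [hspow, Ideal.span_le]
    intro x hx
    rw [Set.mem_pow] at hx
    obtain ⟨F, hFx⟩ := hx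
    have hxhom : x.IsHomogeneous k := by
      rw [← hFx, List.prod_ofFn]
      have hch : ∀ i : Fin k, ∃ j, (F i : MvPolynomial (Fin n) K) = X j := fun i => by
        obtain ⟨j, hj⟩ := (F i).2
        exact ⟨j, hj.symm⟩
      choose jj hjj using hch
      have hp := IsHomogeneous.prod Finset.univ
        (fun i : Fin k => (F i : MvPolynomial (Fin n) K)) (fun _ => 1)
        (fun i _ => by
          show ((F i : MvPolynomial (Fin n) K)).IsHomogeneous 1
          rw [hjj i]; exact isHomogeneous_X _ _)
      simpa using hp
    have hcore := core (K := K) m n k m hmk le_rfl l hl hgen x hxhom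
    have hle : Submodule.span K ((fun s : Finset (Fin m) => ∏ i ∈ s, l i) ''
        {s : Finset (Fin m) | s.card = k}) ≤
        (Ideal.span ((fun s : Finset (Fin m) => ∏ i ∈ s, l i) ''
          {s : Finset (Fin m) | s.card = k})).restrictScalars K :=
      Submodule.span_le.mpr fun p hp => Ideal.subset_span hp
    exact hle hcore
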